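/- Let N₁,…,N_n be independent real random variables, each symmetric about zero with no atom at 0, and let {α_{i,t}}, i = 1,…,m-1, t = 1,…,n, be i.i.d. random signs independent of the noise. Set α_{0,t} := 1. Fix measurable S : ℝ^n → ℝ^d. Then the random vectors S(α_{i,1}N₁, …, α_{i,n}N_n), i = 0,…,m-1, are exchangeable; in particular, conditionally on (|N₁|,…,|N_n|) they are i.i.d. -/

import Mathlib

open MeasureTheory ProbabilityTheory Set

/-- Rademacher distribution on ℝ: values ±1 with probability 1/2 each. -/
noncomputable def signMeasure : Measure ℝ :=
  (2:ENNReal)⁻¹ • Measure.dirac (1:ℝ) + (2:ENNReal)⁻¹ • Measure.dirac (-1:ℝ)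

instance : IsProbabilityMeasure signMeasure := by
  constructor
  simp only [signMeasure, Measure.add_apply, Measure.smul_apply, Measure.dirac_apply,
    smul_eq_mul]
  simp
  rw [ENNReal.inv_two_add_inv_two]

lemma map_neg_signMeasure : Measure.map (fun x : ℝ => -x) signMeasure = signMeasure := by
  rw [signMeasure, Measure.map_add _ _ measurable_neg, Measure.map_smul, Measure.map_smul,
    Measure.map_dirac' measurable_neg, Measure.map_dirac' measurable_neg]
  simp [signMeasure, add_comm]

lemma ae_signMeasure : ∀ᵐ x ∂signMeasure, x = 1 ∨ x = -1 := by
  rw [ae_iff]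
  have : {x : ℝ | ¬(x = 1 ∨ x = -1)} = {(1:ℝ), -1}ᶜ := by ext x; simp [not_or]
  rw [this, signMeasure]
  simp [Measure.dirac_apply']


lemma map_prod_of_fiber {E Y Z : Type*} [MeasurableSpace E] [MeasurableSpace Y]
    [MeasurableSpace Z] (μ : Measure E) [IsProbabilityMeasure μ] (Q : Measure Y)
    [SigmaFinite Q] {F : E × Y → Z} (hF : Measurable F) (ρ : Measure Z)
    (h : ∀ᵐ e ∂μ, Measure.map (fun y => F (e, y)) Q = ρ) :
    Measure.map F (μ.prod Q) = ρ := by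
  ext s hs
  rw [Measure.map_apply hF hs, Measure.prod_apply (hF hs)]
  have : ∫⁻ e, Q (Prod.mk e ⁻¹' (F ⁻¹' s)) ∂μ = ∫⁻ _, ρ s ∂μ := by
    refine lintegral_congr_ae (h.mono fun e he => ?_)
    have h2 := Measure.map_apply (μ := Q) (f := fun y => F (e,y))
      (hF.comp measurable_prodMk_left) hs
    dsimp only
    rw [← he, h2]
    rfl
  rw [this, lintegral_const, measure_univ, mul_one]

lemma pi_dirac {ι : Type*} [Fintype ι] {β : ι → Type*} [∀ i, MeasurableSpace (β i)]
    (c : ∀ i, β i) : Measure.pi (fun i => Measure.dirac (c i)) = Measure.dirac c := by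
  refine Measure.pi_eq fun s hs => ?_
  rw [Measure.dirac_apply' _ (MeasurableSet.univ_pi hs)]
  by_cases h : ∀ i, c i ∈ s i
  · rw [Set.indicator_of_mem (by simpa using h)]
    refine Eq.symm (Finset.prod_eq_one fun i _ => ?_)
    simp [Measure.dirac_apply' _ (hs i), Set.indicator_of_mem (h i)]
  · push_neg at h
    obtain ⟨i, hi⟩ := h
    rw [Set.indicator_of_notMem (by simp; exact ⟨i, hi⟩)]
    refine (Finset.prod_eq_zero (Finset.mem_univ i) ?_).symm
    rw [Measure.dirac_apply' _ (hs i), Set.indicator_of_notMem hi]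

lemma pi_precomp {ι : Type*} [Fintype ι] (ν : ι → Measure ℝ) [∀ i, IsProbabilityMeasure (ν i)]
    (e : ι ≃ ι) :
    Measure.map (fun x (j : ι) => x (e j)) (Measure.pi ν) = Measure.pi (fun j => ν (e j)) := by
  refine (Measure.pi_eq fun s hs => ?_).symm
  have hmeas : Measurable (fun (x : ι → ℝ) (j : ι) => x (e j)) :=
    measurable_pi_iff.mpr fun j => measurable_pi_apply _
  rw [Measure.map_apply hmeas (MeasurableSet.univ_pi hs)]
  have : (fun x (j : ι) => x (e j)) ⁻¹' (univ.pi s) = univ.pi (fun i => s (e.symm i)) := by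
    ext x
    simp only [mem_preimage, mem_univ_pi]
    constructor
    · intro h i; have := h (e.symm i); simpa using this
    · intro h j; have := h (e j); simpa using this
  rw [this, Measure.pi_pi]
  exact (Fintype.prod_equiv e _ _ (fun j => by simp)).symm

lemma ae_pi_coord {ι : Type*} [Fintype ι] (ν : ι → Measure ℝ) [∀ i, IsProbabilityMeasure (ν i)]
    {p : ℝ → Prop} (j : ι) (h : ∀ᵐ y ∂ν j, p y) : ∀ᵐ x ∂Measure.pi ν, p (x j) := by
  rw [ae_iff] at h ⊢
  exact Measure.pi_eval_preimage_null _ h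

lemma master {n m : ℕ} (μ : Fin n → Measure ℝ) [∀ t, IsProbabilityMeasure (μ t)]
    (hsym : ∀ t, Measure.map (fun x : ℝ => -x) (μ t) = μ t) (i₀ : Fin m) :
    Measure.map (fun x (q : Fin m × Fin n) => x (Sum.inr q) * x (Sum.inl q.2))
      (Measure.pi (Sum.elim μ (fun q => if q.1 = i₀ then Measure.dirac 1 else signMeasure))) =
    Measure.map (fun x (q : Fin m × Fin n) => x (Sum.inr q) * x (Sum.inl q.2))
      (Measure.pi (Sum.elim μ (fun _ => signMeasure))) := by
  classical
  set J := (Fin n ⊕ (Fin m × Fin n)) with hJ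
  set g : (J → ℝ) → (Fin m × Fin n → ℝ) :=
    fun x (q : Fin m × Fin n) => x (Sum.inr q) * x (Sum.inl q.2) with hgdef
  have hg : Measurable g :=
    measurable_pi_iff.mpr fun q => (measurable_pi_apply _).mul (measurable_pi_apply _)
  set p : J → Prop := fun j => Sum.elim (fun _ => False) (fun q => q.1 = i₀) j with hp
  set ν : J → Measure ℝ :=
    Sum.elim μ (fun q => if q.1 = i₀ then Measure.dirac 1 else signMeasure) with hν
  set νs : J → Measure ℝ := Sum.elim μ (fun _ => signMeasure) with hνs
  haveI : ∀ j, IsProbabilityMeasure (ν j) := by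
    intro j
    rcases j with t | q
    · simpa [ν] using inferInstanceAs (IsProbabilityMeasure (μ t))
    · simp only [ν, Sum.elim_inr]
      split_ifs <;> infer_instance
  haveI : ∀ j, IsProbabilityMeasure (νs j) := by
    intro j
    rcases j with t | q
    · simpa [νs] using inferInstanceAs (IsProbabilityMeasure (μ t))
    · simpa [νs] using inferInstanceAs (IsProbabilityMeasure signMeasure)
  set E := MeasurableEquiv.piEquivPiSubtypeProd (fun _ : J => ℝ) p with hE
  set Q : Measure ({j : J // ¬ p j} → ℝ) := Measure.pi (fun j => νs j.1) with hQ
  have hν_p : (fun j : {j : J // p j} => ν j.1) = fun _ => Measure.dirac (1:ℝ) := by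
    funext j
    obtain ⟨j, hj⟩ := j
    rcases j with t | q
    · exact absurd hj (by simp [p])
    · have : q.1 = i₀ := by simpa [p] using hj
      simp [ν, this]
  have hνs_p : (fun j : {j : J // p j} => νs j.1) = fun _ => signMeasure := by
    funext j
    obtain ⟨j, hj⟩ := j
    rcases j with t | q
    · exact absurd hj (by simp [p])
    · simp [νs]
  have hν_np : (fun j : {j : J // ¬ p j} => ν j.1) = fun j => νs j.1 := by
    funext j
    obtain ⟨j, hj⟩ := j
    rcases j with t | q
    · simp [ν, νs]
    · have : ¬ q.1 = i₀ := by simpa [p] using hj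
      simp [ν, νs, this]
  set Φ : (({j : J // p j} → ℝ) × ({j : J // ¬ p j} → ℝ)) → (Fin m × Fin n → ℝ) :=
    fun z => g (E.symm z) with hΦdef
  have hΦ : Measurable Φ := hg.comp E.symm.measurable
  -- left side
  have hL : Measure.map g (Measure.pi ν) =
      Measure.map (fun y => Φ (fun _ => (1:ℝ), y)) Q := by
    have h1 : MeasurePreserving E.symm
        ((Measure.pi (fun j : {j : J // p j} => ν j.1)).prod
          (Measure.pi (fun j : {j : J // ¬ p j} => ν j.1))) (Measure.pi ν) :=
      (measurePreserving_piEquivPiSubtypeProd ν p).symm E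
    rw [← h1.map_eq, Measure.map_map hg E.symm.measurable, hν_p, hν_np, ← hQ, pi_dirac,
      Measure.dirac_prod, Measure.map_map (hg.comp E.symm.measurable) measurable_prodMk_left]
    rfl
  -- right side
  have hR : Measure.map g (Measure.pi νs) =
      Measure.map (fun y => Φ (fun _ => (1:ℝ), y)) Q := by
    have h1 : MeasurePreserving E.symm
        ((Measure.pi (fun j : {j : J // p j} => νs j.1)).prod
          (Measure.pi (fun j : {j : J // ¬ p j} => νs j.1))) (Measure.pi νs) :=
      (measurePreserving_piEquivPiSubtypeProd νs p).symm E
    rw [← h1.map_eq, Measure.map_map hg E.symm.measurable, hνs_p, ← hQ]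
    refine map_prod_of_fiber _ Q hΦ _ ?_
    have hae : ∀ᵐ e ∂(Measure.pi (fun _ : {j : J // p j} => signMeasure)),
        ∀ j, e j = 1 ∨ e j = -1 :=
      ae_all_iff.mpr fun j => ae_pi_coord _ (p := fun y => y = 1 ∨ y = -1) j ae_signMeasure
    refine hae.mono fun e he => ?_
    -- the scaling map
    have hpmem : ∀ t : Fin n, p (Sum.inr (i₀, t)) := fun t => by simp [p]
    set c : {j : J // ¬ p j} → ℝ :=
      fun j => e ⟨Sum.inr (i₀, Sum.elim id Prod.snd j.1), hpmem _⟩ with hc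
    have hc_pm : ∀ j, c j = 1 ∨ c j = -1 := fun j => he _
    set R : ({j : J // ¬ p j} → ℝ) → ({j : J // ¬ p j} → ℝ) := fun y j => c j * y j with hRdef
    have hRmp : MeasurePreserving R Q Q := by
      refine measurePreserving_pi _ _ (fun j => ⟨measurable_const_mul _, ?_⟩)
      rcases hc_pm j with h | h
      · have h2 : (HMul.hMul (c j) : ℝ → ℝ) = id := funext fun x => by rw [h]; simp
        rw [h2, Measure.map_id]
      · have h2 : (HMul.hMul (c j) : ℝ → ℝ) = fun x : ℝ => -x := funext fun x => by rw [h]; ring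
        rw [h2]
        obtain ⟨j', hj'⟩ := j
        rcases j' with t | q
        · simpa [νs] using hsym t
        · simpa [νs] using map_neg_signMeasure
    have hcomp : ∀ y, Φ (e, R y) = Φ (fun _ => (1:ℝ), y) := by
      intro y
      funext q
      have hsymm : ∀ (z : ({j : J // p j} → ℝ) × ({j : J // ¬ p j} → ℝ)) (j : J),
          E.symm z j = if h : p j then z.1 ⟨j, h⟩ else z.2 ⟨j, h⟩ := fun z j => rfl
      have hnp_inl : ∀ t : Fin n, ¬ p (Sum.inl t) := fun t => by simp [p]
      simp only [Φ, g, hsymm]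
      by_cases hq : q.1 = i₀
      · rw [dif_pos (show p (Sum.inr q) by simp [p, hq]), dif_pos (show p (Sum.inr q) by simp [p, hq]),
          dif_neg (hnp_inl q.2), dif_neg (hnp_inl q.2)]
        have hcval : c ⟨Sum.inl q.2, hnp_inl q.2⟩ = e ⟨Sum.inr q, by simp [p, hq]⟩ := by
          simp only [c, Sum.elim_inl, id]
          congr 1
          exact Subtype.ext (by simp [← hq])
        show e _ * (c _ * y _) = 1 * y _
        rw [hcval, ← mul_assoc]
        rcases he ⟨Sum.inr q, by simp [p, hq]⟩ with h | h <;> rw [h] <;> ring_nf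
      · rw [dif_neg (show ¬ p (Sum.inr q) by simp [p, hq]),
          dif_neg (show ¬ p (Sum.inr q) by simp [p, hq]),
          dif_neg (hnp_inl q.2), dif_neg (hnp_inl q.2)]
        show (c _ * y _) * (c _ * y _) = y _ * y _
        have hc1 : c ⟨Sum.inr q, by simp [p, hq]⟩ = e ⟨Sum.inr (i₀, q.2), hpmem _⟩ := rfl
        have hc2 : c ⟨Sum.inl q.2, hnp_inl q.2⟩ = e ⟨Sum.inr (i₀, q.2), hpmem _⟩ := rfl
        rw [hc1, hc2]
        rcases he ⟨Sum.inr (i₀, q.2), hpmem _⟩ with h | h <;> rw [h] <;> ring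
    calc Measure.map (fun y => Φ (e, y)) Q
        = Measure.map (fun y => Φ (e, y)) (Measure.map R Q) := by rw [hRmp.map_eq]
      _ = Measure.map ((fun y => Φ (e, y)) ∘ R) Q :=
          Measure.map_map (hΦ.comp measurable_prodMk_left) hRmp.measurable
      _ = Measure.map (fun y => Φ (fun _ => (1:ℝ), y)) Q := by
          congr 1; funext y; exact hcomp y
  rw [← hgdef] at *
  rw [hL, hR]

/-- With independent symmetric noises N₁,…,N_n (no atom at 0), i.i.d. random signs
α_{i,t} (i=1,…,m-1) independent of the noise, and α_{0,t} := 1, the random vectors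
S(α_{i,1}N₁,…,α_{i,n}N_n), i = 0,…,m-1, are exchangeable. -/
theorem stmt5 {Ω : Type*} [MeasureSpace Ω] [IsProbabilityMeasure (ℙ : Measure Ω)]
    (n m d : ℕ) (hm : 0 < m)
    (N : Fin n → Ω → ℝ) (α : Fin m → Fin n → Ω → ℝ)
    (hNmeas : ∀ t, Measurable (N t)) (hαmeas : ∀ i t, Measurable (α i t))
    (hα0 : ∀ t ω, α ⟨0, hm⟩ t ω = 1)
    (hαsign : ∀ i t, i ≠ ⟨0, hm⟩ → Measure.map (α i t) ℙ = signMeasure)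
    (hNsym : ∀ t, Measure.map (N t) ℙ = Measure.map (fun ω => -N t ω) ℙ)
    (hNnoatom : ∀ t, ℙ {ω | N t ω = 0} = 0)
    (hindep : iIndepFun
      (Sum.elim (fun t => N t) (fun p : Fin m × Fin n => α p.1 p.2)) ℙ)
    (S : (Fin n → ℝ) → (Fin d → ℝ)) (hS : Measurable S) :
    ∀ σ : Equiv.Perm (Fin m),
      Measure.map (fun ω (i : Fin m) => S (fun t => α i t ω * N t ω)) ℙ =
      Measure.map (fun ω (i : Fin m) => S (fun t => α (σ i) t ω * N t ω)) ℙ := by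
  classical
  intro σ
  set i0 : Fin m := ⟨0, hm⟩ with hi0
  set J := (Fin n ⊕ (Fin m × Fin n)) with hJ
  set f : ∀ _ : J, Ω → ℝ := Sum.elim (fun t => N t) (fun q => α q.1 q.2) with hf
  have hfmeas : ∀ j, Measurable (f j) := by
    intro j; rcases j with t | q
    · exact hNmeas t
    · exact hαmeas q.1 q.2
  set X : Ω → (J → ℝ) := fun ω j => f j ω with hX
  have hXmeas : Measurable X := measurable_pi_iff.mpr hfmeas
  set μ : Fin n → Measure ℝ := fun t => Measure.map (N t) ℙ with hμ
  haveI : ∀ t, IsProbabilityMeasure (μ t) :=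
    fun t => Measure.isProbabilityMeasure_map (hNmeas t).aemeasurable
  have hsym : ∀ t, Measure.map (fun x : ℝ => -x) (μ t) = μ t := by
    intro t
    rw [hμ]
    rw [Measure.map_map measurable_neg (hNmeas t)]
    exact (hNsym t).symm
  set ν : J → Measure ℝ :=
    Sum.elim μ (fun q => if q.1 = i0 then Measure.dirac 1 else signMeasure) with hν
  haveI : ∀ j, IsProbabilityMeasure (ν j) := by
    intro j; rcases j with t | q
    · simpa [ν] using inferInstanceAs (IsProbabilityMeasure (μ t))
    · simp only [ν, Sum.elim_inr]; split_ifs <;> infer_instance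
  -- marginals
  have hmarg : ∀ j, Measure.map (f j) ℙ = ν j := by
    intro j; rcases j with t | q
    · rfl
    · by_cases hq : q.1 = i0
      · have : f (Sum.inr q) = fun _ => (1:ℝ) := by
          funext ω; simp only [f, Sum.elim_inr]; rw [hq]; exact hα0 q.2 ω
        rw [this]
        simp [ν, hq, Measure.map_const]
      · simp only [ν, Sum.elim_inr, if_neg hq]
        exact hαsign q.1 q.2 hq
  -- joint law is the product measure
  have hmapX : Measure.map X ℙ = Measure.pi ν := by
    refine (Measure.pi_eq fun s hs => ?_).symm
    rw [Measure.map_apply hXmeas (MeasurableSet.univ_pi hs)]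
    have hset : X ⁻¹' univ.pi s = ⋂ j ∈ Finset.univ, f j ⁻¹' s j := by
      ext ω; simp [X, Set.mem_iInter, Set.mem_univ_pi]
    rw [hset, hindep.measure_inter_preimage_eq_mul Finset.univ (fun j _ => hs j)]
    refine Finset.prod_congr rfl fun j _ => ?_
    rw [← hmarg j, Measure.map_apply (hfmeas j) (hs j)]
  -- the two composition pieces
  set g : (J → ℝ) → (Fin m × Fin n → ℝ) :=
    fun x (q : Fin m × Fin n) => x (Sum.inr q) * x (Sum.inl q.2) with hg
  have hgmeas : Measurable g :=
    measurable_pi_iff.mpr fun q => (measurable_pi_apply _).mul (measurable_pi_apply _)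
  set F : (Fin m × Fin n → ℝ) → (Fin m → Fin d → ℝ) := fun z i => S (fun t => z (i, t)) with hF
  have hFmeas : Measurable F :=
    measurable_pi_iff.mpr fun i => hS.comp (measurable_pi_iff.mpr fun t => measurable_pi_apply _)
  -- left side
  have hLfun : (fun ω (i : Fin m) => S (fun t => α i t ω * N t ω)) = (F ∘ g) ∘ X := rfl
  have hL : Measure.map (fun ω (i : Fin m) => S (fun t => α i t ω * N t ω)) ℙ =
      Measure.map F (Measure.map g (Measure.pi ν)) := by
    rw [hLfun, ← Measure.map_map (hFmeas.comp hgmeas) hXmeas, hmapX,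
      ← Measure.map_map hFmeas hgmeas]
  -- right side
  set eσ : J ≃ J := Equiv.sumCongr (Equiv.refl (Fin n)) (σ.prodCongr (Equiv.refl (Fin n)))
    with heσ
  set Xσ : Ω → (J → ℝ) := fun ω j => X ω (eσ j) with hXσ
  have hRfun : (fun ω (i : Fin m) => S (fun t => α (σ i) t ω * N t ω)) = (F ∘ g) ∘ Xσ := rfl
  set ν' : J → Measure ℝ :=
    Sum.elim μ (fun q => if q.1 = σ.symm i0 then Measure.dirac 1 else signMeasure) with hν'
  have hνeσ : (fun j => ν (eσ j)) = ν' := by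
    funext j
    rcases j with t | q
    · rfl
    · show (if σ q.1 = i0 then Measure.dirac 1 else signMeasure) = _
      simp only [ν', Sum.elim_inr]
      congr 1
      exact propext (Equiv.apply_eq_iff_eq_symm_apply σ)
  have hmapXσ : Measure.map Xσ ℙ = Measure.pi ν' := by
    have h0 : Xσ = (fun x (j : J) => x (eσ j)) ∘ X := rfl
    rw [h0, ← Measure.map_map (measurable_pi_iff.mpr fun j => measurable_pi_apply _) hXmeas,
      hmapX, pi_precomp ν eσ, hνeσ]
  have hR : Measure.map (fun ω (i : Fin m) => S (fun t => α (σ i) t ω * N t ω)) ℙ =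
      Measure.map F (Measure.map g (Measure.pi ν')) := by
    have hXσmeas : Measurable Xσ := (measurable_pi_iff.mpr fun j => measurable_pi_apply _).comp hXmeas
    rw [hRfun, ← Measure.map_map (hFmeas.comp hgmeas) hXσmeas, hmapXσ,
      ← Measure.map_map hFmeas hgmeas]
  rw [hL, hR]
  congr 1
  rw [hg, hν, hν', master μ hsym i0, ← master μ hsym (σ.symm i0)]
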